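/- If X ⊆ P is nonempty, p, q ∈ P with p ≠ q, X ∪ {p} ∉ Γ, X ∪ {q} ∉ Γ, and X ∪ {p, q} ∈ Γ, then 2 ≤ h(X ∪ {p, q}) − h(X), i.e., 2·H(S) ≤ H(X ∪ {p, q}) − H(X). -/

import Mathlib

open MeasureTheory Finset

/-- Shannon entropy of a random variable with values in a finite type:
`H(f) = ∑ₐ −P(f = a)·log P(f = a)`. -/
noncomputable def shannonEntropy {Ω : Type} [MeasurableSpace Ω] {α : Type} [Fintype α]
    (μ : Measure Ω) (f : Ω → α) : ℝ :=
  ∑ a : α, Real.negMulLog ((μ (f ⁻¹' {a})).toReal)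

/-- A family of random variables on a common probability space: one (finite-valued)
random variable `secret` for the secret, and one random variable `share p` for the
share of each participant `p`. -/
structure Scheme (P : Type) [Fintype P] [DecidableEq P] where
  (Ω : Type)
  [mΩ : MeasurableSpace Ω]
  (μ : Measure Ω)
  [prob : IsProbabilityMeasure μ]
  (SecT : Type)
  [secFin : Fintype SecT]
  (ShT : P → Type)
  [shFin : ∀ p, Fintype (ShT p)]
  (secret : Ω → SecT)
  (share : (p : P) → Ω → ShT p)
  (secret_meas : ∀ s : Set SecT, MeasurableSet (secret ⁻¹' s))
  (share_meas : ∀ p, ∀ s : Set (ShT p), MeasurableSet (share p ⁻¹' s))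

namespace Scheme

variable {P : Type} [Fintype P] [DecidableEq P]

/-- `H(S)`: the entropy of the secret. -/
noncomputable def Hsec (S : Scheme P) : ℝ :=
  letI := S.mΩ; letI := S.secFin
  shannonEntropy S.μ S.secret

/-- `H(X)`: the joint entropy of the shares of the participants in `X`. -/
noncomputable def Hset (S : Scheme P) (X : Finset P) : ℝ :=
  letI := S.mΩ; letI := S.shFin
  shannonEntropy S.μ (fun ω => fun p : {y // y ∈ X} => S.share p.1 ω)

/-- `H(X ∪ {S})`: the joint entropy of the shares of the participants in `X`
together with the secret. -/
noncomputable def HsetS (S : Scheme P) (X : Finset P) : ℝ :=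
  letI := S.mΩ; letI := S.secFin; letI := S.shFin
  shannonEntropy S.μ (fun ω => ((fun p : {y // y ∈ X} => S.share p.1 ω), S.secret ω))

/-- The normalized entropy `h(X) = H(X)/H(S)`. -/
noncomputable def hset (S : Scheme P) (X : Finset P) : ℝ := S.Hset X / S.Hsec

/-- The conditional normalized entropy `h(X|Y) = h(X ∪ Y) − h(Y)`. -/
noncomputable def hcond (S : Scheme P) (X Y : Finset P) : ℝ :=
  S.hset (X ∪ Y) - S.hset Y

/-- `Σ` is a perfect secret sharing scheme for the access structure `Γ`:
the conditional entropy `H(S|X) = H(X ∪ {S}) − H(X)` equals `0` for every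
qualified set `X` and equals `H(S)` for every unqualified set `X`. -/
def IsPerfect (S : Scheme P) (Γ : Finset P → Prop) : Prop :=
  (∀ X : Finset P, Γ X → S.HsetS X - S.Hset X = 0) ∧
  (∀ X : Finset P, ¬ Γ X → S.HsetS X - S.Hset X = S.Hsec)

end Scheme

section Aux

lemma negMulLog_add_le' {x y : ℝ} (hx : 0 ≤ x) (hy : 0 ≤ y) :
    Real.negMulLog (x + y) ≤ Real.negMulLog x + Real.negMulLog y := by
  rcases eq_or_lt_of_le hx with h | h
  · simp [← h]
  rcases eq_or_lt_of_le hy with h' | h'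
  · simp [← h']
  have h1 : Real.log x ≤ Real.log (x + y) := Real.log_le_log h (by linarith)
  have h2 : Real.log y ≤ Real.log (x + y) := Real.log_le_log h' (by linarith)
  simp only [Real.negMulLog, neg_mul]
  nlinarith

lemma negMulLog_sum_le' {ι : Type*} (s : Finset ι) (f : ι → ℝ) (hf : ∀ i ∈ s, 0 ≤ f i) :
    Real.negMulLog (∑ i ∈ s, f i) ≤ ∑ i ∈ s, Real.negMulLog (f i) := by
  induction s using Finset.cons_induction with
  | empty => simp
  | cons a s ha ih =>
    rw [Finset.sum_cons, Finset.sum_cons]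
    calc Real.negMulLog (f a + ∑ i ∈ s, f i)
        ≤ Real.negMulLog (f a) + Real.negMulLog (∑ i ∈ s, f i) :=
          negMulLog_add_le' (hf a (Finset.mem_cons_self a s))
            (Finset.sum_nonneg fun i hi => hf i (Finset.mem_cons_of_mem hi))
      _ ≤ _ := by
          gcongr
          exact ih fun i hi => hf i (Finset.mem_cons_of_mem hi)

lemma core_submod {α β : Type} [Fintype α] [Fintype β] (p : α → β → ℝ)
    (hp : ∀ a b, 0 ≤ p a b) :
    ∑ a : α, ∑ b : β, Real.negMulLog (p a b) + Real.negMulLog (∑ a : α, ∑ b : β, p a b)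
      ≤ ∑ a : α, Real.negMulLog (∑ b : β, p a b)
        + ∑ b : β, Real.negMulLog (∑ a : α, p a b) := by
  classical
  set r : α → ℝ := fun a => ∑ b, p a b with hr
  set q : β → ℝ := fun b => ∑ a, p a b with hq
  set s : ℝ := ∑ a : α, ∑ b : β, p a b with hs
  have hr0 : ∀ a, 0 ≤ r a := fun a => Finset.sum_nonneg fun b _ => hp a b
  have hq0 : ∀ b, 0 ≤ q b := fun b => Finset.sum_nonneg fun a _ => hp a b
  have hs0 : 0 ≤ s := Finset.sum_nonneg fun a _ => hr0 a
  have hsr : s = ∑ a, r a := rfl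
  have hsq : s = ∑ b, q b := Finset.sum_comm
  rcases eq_or_lt_of_le hs0 with h0 | hspos
  · have hall : ∀ a b, p a b = 0 := by
      intro a b
      have hra : r a = 0 := by
        have := Finset.sum_eq_zero_iff_of_nonneg (fun a _ => hr0 a) |>.1 h0.symm
        exact this a (mem_univ a)
      have := Finset.sum_eq_zero_iff_of_nonneg (fun b _ => hp a b) |>.1 hra
      exact this b (mem_univ b)
    simp [hall, ← hs, ← h0, hr, hq]
  · have key : ∀ a b,
        (Real.log (r a) + Real.log (q b) - Real.log (p a b) - Real.log s) * p a b
          ≤ r a * q b / s - p a b := by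
      intro a b
      rcases eq_or_lt_of_le (hp a b) with h | h
      · rw [← h]
        have : 0 ≤ r a * q b / s := div_nonneg (mul_nonneg (hr0 a) (hq0 b)) hs0
        simpa using this
      · have hra : 0 < r a := lt_of_lt_of_le h (Finset.single_le_sum (fun i _ => hp a i) (mem_univ b))
        have hqb : 0 < q b := lt_of_lt_of_le h (Finset.single_le_sum (fun i _ => hp i b) (mem_univ a))
        have hX : (0:ℝ) < r a * q b / (p a b * s) := by positivity
        have hlog := Real.log_le_sub_one_of_pos hX
        have hexp : Real.log (r a * q b / (p a b * s))
            = Real.log (r a) + Real.log (q b) - Real.log (p a b) - Real.log s := by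
          rw [Real.log_div (by positivity) (by positivity),
            Real.log_mul hra.ne' hqb.ne', Real.log_mul h.ne' hspos.ne']
          ring
        have h2 : p a b * (r a * q b / (p a b * s) - 1) = r a * q b / s - p a b := by
          field_simp
        calc (Real.log (r a) + Real.log (q b) - Real.log (p a b) - Real.log s) * p a b
            = p a b * Real.log (r a * q b / (p a b * s)) := by rw [hexp]; ring
          _ ≤ p a b * (r a * q b / (p a b * s) - 1) := by
              exact mul_le_mul_of_nonneg_left hlog h.le
          _ = r a * q b / s - p a b := h2
    have H1 : ∑ a : α, ∑ b : β,
        (Real.log (r a) + Real.log (q b) - Real.log (p a b) - Real.log s) * p a b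
        ≤ ∑ a : α, ∑ b : β, (r a * q b / s - p a b) :=
      Finset.sum_le_sum fun a _ => Finset.sum_le_sum fun b _ => key a b
    have H2 : ∑ a : α, ∑ b : β, (r a * q b / s - p a b) = 0 := by
      have e1 : ∀ a, ∑ b : β, (r a * q b / s - p a b) = r a * s / s - r a := by
        intro a
        rw [Finset.sum_sub_distrib]
        congr 1
        rw [← Finset.sum_div, ← Finset.mul_sum, ← hsq]
      rw [Finset.sum_congr rfl fun a _ => e1 a, Finset.sum_sub_distrib]
      rw [← Finset.sum_div, ← Finset.sum_mul, ← hsr]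
      field_simp
      ring
    have H3 : ∑ a : α, ∑ b : β,
        (Real.log (r a) + Real.log (q b) - Real.log (p a b) - Real.log s) * p a b
        = (∑ a, Real.log (r a) * r a) + (∑ b, Real.log (q b) * q b)
          - (∑ a : α, ∑ b : β, Real.log (p a b) * p a b) - Real.log s * s := by
      have e1 : ∀ a, ∑ b : β,
          (Real.log (r a) + Real.log (q b) - Real.log (p a b) - Real.log s) * p a b
          = Real.log (r a) * r a + (∑ b, Real.log (q b) * p a b)
            - (∑ b, Real.log (p a b) * p a b) - Real.log s * r a := by
        intro a
        simp only [sub_mul, add_mul, Finset.sum_sub_distrib, Finset.sum_add_distrib]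
        rw [← Finset.mul_sum, ← Finset.mul_sum]
      rw [Finset.sum_congr rfl fun a _ => e1 a]
      simp only [Finset.sum_sub_distrib, Finset.sum_add_distrib]
      rw [← Finset.mul_sum, ← hsr]
      congr 2
      have emid : ∑ a : α, ∑ b : β, Real.log (q b) * p a b
          = ∑ b : β, Real.log (q b) * q b :=
        (Finset.sum_comm (s := Finset.univ) (t := Finset.univ)
          (f := fun a b => Real.log (q b) * p a b)).trans
          (Finset.sum_congr rfl fun b _ => (Finset.mul_sum Finset.univ (fun a => p a b)
            (Real.log (q b))).symm)
      rw [emid]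
    have this1 : (∑ a, Real.log (r a) * r a) + (∑ b, Real.log (q b) * q b)
          - (∑ a : α, ∑ b : β, Real.log (p a b) * p a b) - Real.log s * s ≤ 0 := by
      rw [← H3]; linarith
    have hneg : ∀ x : ℝ, Real.negMulLog x = -(Real.log x * x) := by
      intro x; simp only [Real.negMulLog_def]; ring
    simp only [hneg, Finset.sum_neg_distrib]
    linarith [this1]

variable {Ω : Type} [MeasurableSpace Ω] (μ : Measure Ω) [IsProbabilityMeasure μ]

lemma toReal_measure_biUnion' {ι : Type*} (s : Finset ι) (A : ι → Set Ω)
    (hA : ∀ i, MeasurableSet (A i)) (hd : (s : Set ι).PairwiseDisjoint A) :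
    (μ (⋃ i ∈ s, A i)).toReal = ∑ i ∈ s, (μ (A i)).toReal := by
  rw [measure_biUnion_finset hd fun i _ => hA i,
    ENNReal.toReal_sum fun i _ => measure_ne_top μ (A i)]

omit [MeasurableSpace Ω] in
lemma preimage_singleton_disjoint {α : Type*} (f : Ω → α) {a b : α} (h : a ≠ b) :
    Disjoint (f ⁻¹' {a}) (f ⁻¹' {b}) := by
  rw [Set.disjoint_left]
  rintro ω (rfl : f ω = a) (rfl : f ω = b)
  exact h rfl

lemma meas_comp_singleton {α β : Type*} [Fintype α] [DecidableEq β]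
    (f : Ω → α) (g : α → β) (hf : ∀ a : α, MeasurableSet (f ⁻¹' {a})) (b : β) :
    (μ ((fun ω => g (f ω)) ⁻¹' {b})).toReal
      = ∑ a ∈ Finset.univ.filter (fun a => g a = b), (μ (f ⁻¹' {a})).toReal := by
  have hset : (fun ω => g (f ω)) ⁻¹' {b}
      = ⋃ a ∈ Finset.univ.filter (fun a => g a = b), f ⁻¹' {a} := by
    ext ω
    simp only [Set.mem_preimage, Set.mem_singleton_iff, Set.mem_iUnion, Finset.mem_filter,
      Finset.mem_univ, true_and]
    constructor
    · intro h; exact ⟨f ω, h, rfl⟩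
    · rintro ⟨a, h1, h2⟩; rw [h2, h1]
  rw [hset, toReal_measure_biUnion' μ _ _ hf]
  intro i hi j hj hij
  exact preimage_singleton_disjoint f hij

lemma shannonEntropy_comp_le {α β : Type} [Fintype α] [Fintype β]
    (f : Ω → α) (g : α → β) (hf : ∀ a : α, MeasurableSet (f ⁻¹' {a})) :
    shannonEntropy μ (fun ω => g (f ω)) ≤ shannonEntropy μ f := by
  classical
  unfold shannonEntropy
  calc ∑ b : β, Real.negMulLog ((μ ((fun ω => g (f ω)) ⁻¹' {b})).toReal)
      = ∑ b : β, Real.negMulLog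
          (∑ a ∈ Finset.univ.filter (fun a => g a = b), (μ (f ⁻¹' {a})).toReal) := by
        refine Finset.sum_congr rfl fun b _ => ?_
        rw [meas_comp_singleton μ f g hf b]
    _ ≤ ∑ b : β, ∑ a ∈ Finset.univ.filter (fun a => g a = b),
          Real.negMulLog ((μ (f ⁻¹' {a})).toReal) := by
        refine Finset.sum_le_sum fun b _ => ?_
        exact negMulLog_sum_le' _ _ fun a _ => ENNReal.toReal_nonneg
    _ = ∑ a : α, Real.negMulLog ((μ (f ⁻¹' {a})).toReal) := by
        exact Finset.sum_fiberwise _ _ _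

lemma shannonEntropy_eq_of_comp {α β : Type} [Fintype α] [Fintype β]
    (f : Ω → α) (g : Ω → β) (φ : α → β) (ψ : β → α)
    (h1 : ∀ ω, φ (f ω) = g ω) (h2 : ∀ ω, ψ (g ω) = f ω)
    (hf : ∀ a : α, MeasurableSet (f ⁻¹' {a})) (hg : ∀ b : β, MeasurableSet (g ⁻¹' {b})) :
    shannonEntropy μ f = shannonEntropy μ g := by
  refine le_antisymm ?_ ?_
  · have : f = fun ω => ψ (g ω) := by funext ω; rw [h2]
    rw [this]
    exact shannonEntropy_comp_le μ g ψ hg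
  · have : g = fun ω => φ (f ω) := by funext ω; rw [h1]
    rw [this]
    exact shannonEntropy_comp_le μ f φ hf

lemma shannonEntropy_pair_congr {α β δ : Type} [Fintype α] [Fintype β] [Fintype δ]
    (f : Ω → α) (g : Ω → β) (z : Ω → δ) (φ : α → β) (ψ : β → α)
    (h1 : ∀ ω, φ (f ω) = g ω) (h2 : ∀ ω, ψ (g ω) = f ω)
    (hfz : ∀ x : α × δ, MeasurableSet ((fun ω => (f ω, z ω)) ⁻¹' {x}))
    (hgz : ∀ x : β × δ, MeasurableSet ((fun ω => (g ω, z ω)) ⁻¹' {x})) :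
    shannonEntropy μ (fun ω => (f ω, z ω)) = shannonEntropy μ (fun ω => (g ω, z ω)) :=
  shannonEntropy_eq_of_comp μ _ _ (fun w => (φ w.1, w.2)) (fun w => (ψ w.1, w.2))
    (fun ω => by simp only; rw [h1 ω]) (fun ω => by simp only; rw [h2 ω]) hfz hgz

lemma meas_pair_singleton {α β : Type*} {f : Ω → α} {g : Ω → β}
    (hf : ∀ a, MeasurableSet (f ⁻¹' {a})) (hg : ∀ b, MeasurableSet (g ⁻¹' {b})) :
    ∀ x : α × β, MeasurableSet ((fun ω => (f ω, g ω)) ⁻¹' {x}) := by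
  rintro ⟨a, b⟩
  have : (fun ω => (f ω, g ω)) ⁻¹' {(a, b)} = f ⁻¹' {a} ∩ g ⁻¹' {b} := by
    ext ω; simp [Prod.ext_iff]
  rw [this]
  exact (hf a).inter (hg b)

lemma shannonEntropy_submodular {α β γ : Type} [Fintype α] [Fintype β] [Fintype γ]
    (f : Ω → α) (g : Ω → β) (k : Ω → γ)
    (hT : ∀ x : α × β × γ, MeasurableSet ((fun ω => (f ω, g ω, k ω)) ⁻¹' {x})) :
    shannonEntropy μ (fun ω => (f ω, g ω, k ω)) + shannonEntropy μ k
      ≤ shannonEntropy μ (fun ω => (f ω, k ω)) + shannonEntropy μ (fun ω => (g ω, k ω)) := by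
  classical
  set T : Ω → α × β × γ := fun ω => (f ω, g ω, k ω) with hT'
  set pr : α → β → γ → ℝ := fun a b c => (μ (T ⁻¹' {(a, b, c)})).toReal with hpr
  have hpr0 : ∀ a b c, 0 ≤ pr a b c := fun a b c => ENNReal.toReal_nonneg
  have claim_fk : ∀ a c, (μ ((fun ω => (f ω, k ω)) ⁻¹' {(a, c)})).toReal = ∑ b : β, pr a b c := by
    intro a c
    have hset : (fun ω => (f ω, k ω)) ⁻¹' {(a, c)}
        = ⋃ b ∈ (Finset.univ : Finset β), T ⁻¹' {(a, b, c)} := by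
      ext ω
      simp only [Set.mem_preimage, Set.mem_singleton_iff, Set.mem_iUnion, Prod.mk.injEq,
        Finset.mem_univ, true_and, hT']
      aesop
    rw [hset, toReal_measure_biUnion' μ _ _ (fun b => hT (a, b, c))]
    intro i _ j _ hij
    refine preimage_singleton_disjoint T ?_
    simp only [ne_eq, Prod.mk.injEq, not_and]
    intro _ h _; exact hij h
  have claim_gk : ∀ b c, (μ ((fun ω => (g ω, k ω)) ⁻¹' {(b, c)})).toReal = ∑ a : α, pr a b c := by
    intro b c
    have hset : (fun ω => (g ω, k ω)) ⁻¹' {(b, c)}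
        = ⋃ a ∈ (Finset.univ : Finset α), T ⁻¹' {(a, b, c)} := by
      ext ω
      simp only [Set.mem_preimage, Set.mem_singleton_iff, Set.mem_iUnion, Prod.mk.injEq,
        Finset.mem_univ, true_and, hT']
      aesop
    rw [hset, toReal_measure_biUnion' μ _ _ (fun a => hT (a, b, c))]
    intro i _ j _ hij
    refine preimage_singleton_disjoint T ?_
    simp only [ne_eq, Prod.mk.injEq, not_and]
    intro h; exact absurd h hij
  have claim_k : ∀ c, (μ (k ⁻¹' {c})).toReal = ∑ ab : α × β, pr ab.1 ab.2 c := by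
    intro c
    have hset : k ⁻¹' {c}
        = ⋃ ab ∈ (Finset.univ : Finset (α × β)), T ⁻¹' {(ab.1, ab.2, c)} := by
      ext ω
      simp only [Set.mem_preimage, Set.mem_singleton_iff, Set.mem_iUnion, Prod.mk.injEq,
        Finset.mem_univ, true_and, hT']
      aesop
    rw [hset, toReal_measure_biUnion' μ _ _ (fun ab : α × β => hT (ab.1, ab.2, c))]
    intro i _ j _ hij
    refine preimage_singleton_disjoint T ?_
    simp only [ne_eq, Prod.mk.injEq, not_and]
    intro h1 h2 _
    exact hij (Prod.ext h1 h2)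
  have eT : shannonEntropy μ T = ∑ a : α, ∑ b : β, ∑ c : γ, Real.negMulLog (pr a b c) := by
    unfold shannonEntropy
    rw [Fintype.sum_prod_type]
    exact Finset.sum_congr rfl fun a _ => Fintype.sum_prod_type _
  have eK : shannonEntropy μ k = ∑ c : γ, Real.negMulLog (∑ a : α, ∑ b : β, pr a b c) := by
    unfold shannonEntropy
    refine Finset.sum_congr rfl fun c _ => ?_
    rw [claim_k c, Fintype.sum_prod_type]
  have eFK : shannonEntropy μ (fun ω => (f ω, k ω))
      = ∑ a : α, ∑ c : γ, Real.negMulLog (∑ b : β, pr a b c) := by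
    unfold shannonEntropy
    rw [Fintype.sum_prod_type]
    refine Finset.sum_congr rfl fun a _ => Finset.sum_congr rfl fun c _ => ?_
    rw [claim_fk a c]
  have eGK : shannonEntropy μ (fun ω => (g ω, k ω))
      = ∑ b : β, ∑ c : γ, Real.negMulLog (∑ a : α, pr a b c) := by
    unfold shannonEntropy
    rw [Fintype.sum_prod_type]
    refine Finset.sum_congr rfl fun b _ => Finset.sum_congr rfl fun c _ => ?_
    rw [claim_gk b c]
  rw [eT, eK, eFK, eGK]
  have percore : ∀ c : γ,
      ∑ a : α, ∑ b : β, Real.negMulLog (pr a b c)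
        + Real.negMulLog (∑ a : α, ∑ b : β, pr a b c)
      ≤ ∑ a : α, Real.negMulLog (∑ b : β, pr a b c)
        + ∑ b : β, Real.negMulLog (∑ a : α, pr a b c) := fun c =>
    core_submod (fun a b => pr a b c) (fun a b => hpr0 a b c)
  have hsum := Finset.sum_le_sum (fun c (_ : c ∈ (Finset.univ : Finset γ)) => percore c)
  rw [Finset.sum_add_distrib, Finset.sum_add_distrib] at hsum
  have comm1 : ∑ a : α, ∑ b : β, ∑ c : γ, Real.negMulLog (pr a b c)
      = ∑ c : γ, ∑ a : α, ∑ b : β, Real.negMulLog (pr a b c) := by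
    calc ∑ a : α, ∑ b : β, ∑ c : γ, Real.negMulLog (pr a b c)
        = ∑ a : α, ∑ c : γ, ∑ b : β, Real.negMulLog (pr a b c) :=
          Finset.sum_congr rfl fun a _ => Finset.sum_comm
      _ = ∑ c : γ, ∑ a : α, ∑ b : β, Real.negMulLog (pr a b c) := Finset.sum_comm
  have comm2 : ∑ a : α, ∑ c : γ, Real.negMulLog (∑ b : β, pr a b c)
      = ∑ c : γ, ∑ a : α, Real.negMulLog (∑ b : β, pr a b c) := Finset.sum_comm
  have comm3 : ∑ b : β, ∑ c : γ, Real.negMulLog (∑ a : α, pr a b c)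
      = ∑ c : γ, ∑ b : β, Real.negMulLog (∑ a : α, pr a b c) := Finset.sum_comm
  rw [comm1, comm2, comm3]
  exact hsum

end Aux

section SchemeAux

variable {P : Type} [Fintype P] [DecidableEq P]

noncomputable def extend1 (S : Scheme P) (X : Finset P) (p : P) :
    (S.ShT p × (∀ y : {z // z ∈ X}, S.ShT y.1)) → ∀ y : {z // z ∈ X ∪ {p}}, S.ShT y.1 :=
  fun w y =>
    if h : y.1 ∈ X then w.2 ⟨y.1, h⟩
    else cast (congrArg S.ShT
      (Finset.mem_singleton.mp ((Finset.mem_union.mp y.2).resolve_left h)).symm) w.1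

lemma extend1_spec (S : Scheme P) (X : Finset P) (p : P) (ω : S.Ω) :
    extend1 S X p (S.share p ω, fun y => S.share y.1 ω)
      = fun y : {z // z ∈ X ∪ {p}} => S.share y.1 ω := by
  funext y
  unfold extend1
  split
  · rfl
  · rename_i h
    obtain ⟨z, hz⟩ := y
    have hzp : z = p := Finset.mem_singleton.mp ((Finset.mem_union.mp hz).resolve_left h)
    subst hzp
    exact eq_of_heq (cast_heq _ _)

noncomputable def extend2 (S : Scheme P) (X : Finset P) (p q : P) :
    (S.ShT p × S.ShT q × (∀ y : {z // z ∈ X}, S.ShT y.1))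
      → ∀ y : {z // z ∈ X ∪ {p, q}}, S.ShT y.1 :=
  fun w y =>
    if h : y.1 ∈ X then w.2.2 ⟨y.1, h⟩
    else if h2 : y.1 = p then cast (congrArg S.ShT h2.symm) w.1
    else cast (congrArg S.ShT (by
      have h3 := (Finset.mem_union.mp y.2).resolve_left h
      rw [Finset.mem_insert] at h3
      exact (Finset.mem_singleton.mp (h3.resolve_left h2)).symm)) w.2.1

lemma extend2_spec (S : Scheme P) (X : Finset P) (p q : P) (ω : S.Ω) :
    extend2 S X p q (S.share p ω, S.share q ω, fun y => S.share y.1 ω)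
      = fun y : {z // z ∈ X ∪ {p, q}} => S.share y.1 ω := by
  funext y
  unfold extend2
  split
  · rfl
  · split
    · rename_i h h2
      obtain ⟨z, hz⟩ := y
      dsimp only at h2
      subst h2
      exact eq_of_heq (cast_heq _ _)
    · rename_i h h2
      obtain ⟨z, hz⟩ := y
      dsimp only at h h2
      have hzq : z = q := by
        have h3 := (Finset.mem_union.mp hz).resolve_left h
        rw [Finset.mem_insert] at h3
        exact Finset.mem_singleton.mp (h3.resolve_left h2)
      subst hzq
      exact eq_of_heq (cast_heq _ _)

end SchemeAux

/-- If `X ⊆ P` is nonempty, `p ≠ q`, `X ∪ {p} ∉ Γ`, `X ∪ {q} ∉ Γ`, and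
`X ∪ {p, q} ∈ Γ`, then `2 ≤ h(X ∪ {p, q}) − h(X)`, i.e.
`2·H(S) ≤ H(X ∪ {p, q}) − H(X)`. -/
theorem add_two_unqualified {P : Type} [Fintype P] [DecidableEq P]
    (Γ : Finset P → Prop) (hΓ : ∀ X Y : Finset P, X ⊆ Y → Γ X → Γ Y)
    (S : Scheme P) (hperf : S.IsPerfect Γ) (hpos : 0 < S.Hsec)
    (X : Finset P) (p q : P) (hX : X.Nonempty) (hpq : p ≠ q)
    (hp : ¬ Γ (X ∪ {p})) (hq : ¬ Γ (X ∪ {q})) (hq' : Γ (X ∪ {p, q})) :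
    2 * S.Hsec ≤ S.Hset (X ∪ {p, q}) - S.Hset X := by
  classical
  letI := S.mΩ
  haveI := S.prob
  letI := S.secFin
  letI := S.shFin
  -- random variables
  set A : S.Ω → S.ShT p := S.share p with hA
  set B : S.Ω → S.ShT q := S.share q with hB
  set K : S.Ω → (∀ y : {z // z ∈ X}, S.ShT y.1) := fun ω => fun y => S.share y.1 ω with hK
  set Z : S.Ω → S.SecT := S.secret with hZ
  -- measurability of singleton preimages
  have htuple : ∀ Y : Finset P, ∀ t : (∀ y : {z // z ∈ Y}, S.ShT y.1),
      MeasurableSet ((fun ω => fun y : {z // z ∈ Y} => S.share y.1 ω) ⁻¹' {t}) := by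
    intro Y t
    have : (fun ω => fun y : {z // z ∈ Y} => S.share y.1 ω) ⁻¹' {t}
        = ⋂ y : {z // z ∈ Y}, S.share y.1 ⁻¹' {t y} := by
      ext ω
      simp [funext_iff]
    rw [this]
    exact MeasurableSet.iInter fun y => S.share_meas y.1 {t y}
  have hmA : ∀ a, MeasurableSet (A ⁻¹' {a}) := fun a => S.share_meas p {a}
  have hmB : ∀ a, MeasurableSet (B ⁻¹' {a}) := fun a => S.share_meas q {a}
  have hmK : ∀ t, MeasurableSet (K ⁻¹' {t}) := htuple X
  have hmZ : ∀ z, MeasurableSet (Z ⁻¹' {z}) := fun z => S.secret_meas {z}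
  have hmBK := meas_pair_singleton (f := B) (g := K) hmB hmK
  have hmAK := meas_pair_singleton (f := A) (g := K) hmA hmK
  have hmABK : ∀ x, MeasurableSet ((fun ω => (A ω, B ω, K ω)) ⁻¹' {x}) :=
    meas_pair_singleton hmA hmBK
  have hmAKZ : ∀ x, MeasurableSet ((fun ω => ((A ω, K ω), Z ω)) ⁻¹' {x}) :=
    meas_pair_singleton hmAK hmZ
  have hmBKZ : ∀ x, MeasurableSet ((fun ω => ((B ω, K ω), Z ω)) ⁻¹' {x}) :=
    meas_pair_singleton hmBK hmZ
  have hmABKZ : ∀ x, MeasurableSet ((fun ω => ((A ω, B ω, K ω), Z ω)) ⁻¹' {x}) :=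
    meas_pair_singleton hmABK hmZ
  have hmTXp : ∀ t, MeasurableSet ((fun ω => fun y : {z // z ∈ X ∪ {p}} => S.share y.1 ω) ⁻¹' {t}) :=
    htuple (X ∪ {p})
  have hmTXq : ∀ t, MeasurableSet ((fun ω => fun y : {z // z ∈ X ∪ {q}} => S.share y.1 ω) ⁻¹' {t}) :=
    htuple (X ∪ {q})
  have hmTXpq : ∀ t, MeasurableSet ((fun ω => fun y : {z // z ∈ X ∪ {p, q}} => S.share y.1 ω) ⁻¹' {t}) :=
    htuple (X ∪ {p, q})
  have hmTXpZ := meas_pair_singleton (f := fun ω => fun y : {z // z ∈ X ∪ {p}} => S.share y.1 ω)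
    (g := Z) hmTXp hmZ
  have hmTXqZ := meas_pair_singleton (f := fun ω => fun y : {z // z ∈ X ∪ {q}} => S.share y.1 ω)
    (g := Z) hmTXq hmZ
  have hmTXpqZ := meas_pair_singleton (f := fun ω => fun y : {z // z ∈ X ∪ {p, q}} => S.share y.1 ω)
    (g := Z) hmTXpq hmZ
  -- identification of entropies
  have E1 : S.Hset (X ∪ {p}) = shannonEntropy S.μ (fun ω => (A ω, K ω)) := by
    refine shannonEntropy_eq_of_comp S.μ _ _
      (fun u => (u ⟨p, Finset.mem_union_right _ (Finset.mem_singleton_self p)⟩,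
        fun y => u ⟨y.1, Finset.mem_union_left _ y.2⟩))
      (extend1 S X p) (fun ω => rfl) (fun ω => extend1_spec S X p ω) hmTXp hmAK
  have E2 : S.Hset (X ∪ {q}) = shannonEntropy S.μ (fun ω => (B ω, K ω)) := by
    refine shannonEntropy_eq_of_comp S.μ _ _
      (fun u => (u ⟨q, Finset.mem_union_right _ (Finset.mem_singleton_self q)⟩,
        fun y => u ⟨y.1, Finset.mem_union_left _ y.2⟩))
      (extend1 S X q) (fun ω => rfl) (fun ω => extend1_spec S X q ω) hmTXq hmBK
  have E3 : S.Hset (X ∪ {p, q}) = shannonEntropy S.μ (fun ω => (A ω, B ω, K ω)) := by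
    refine shannonEntropy_eq_of_comp S.μ _ _
      (fun u => (u ⟨p, Finset.mem_union_right _ (Finset.mem_insert_self p {q})⟩,
        u ⟨q, Finset.mem_union_right _ (Finset.mem_insert_of_mem (Finset.mem_singleton_self q))⟩,
        fun y => u ⟨y.1, Finset.mem_union_left _ y.2⟩))
      (extend2 S X p q) (fun ω => rfl) (fun ω => extend2_spec S X p q ω) hmTXpq hmABK
  have E4 : S.HsetS (X ∪ {p}) = shannonEntropy S.μ (fun ω => ((A ω, K ω), Z ω)) := by
    refine shannonEntropy_pair_congr S.μ _ _ Z
      (fun u => (u ⟨p, Finset.mem_union_right _ (Finset.mem_singleton_self p)⟩,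
        fun y => u ⟨y.1, Finset.mem_union_left _ y.2⟩))
      (extend1 S X p) (fun ω => rfl) (fun ω => extend1_spec S X p ω) hmTXpZ hmAKZ
  have E5 : S.HsetS (X ∪ {q}) = shannonEntropy S.μ (fun ω => ((B ω, K ω), Z ω)) := by
    refine shannonEntropy_pair_congr S.μ _ _ Z
      (fun u => (u ⟨q, Finset.mem_union_right _ (Finset.mem_singleton_self q)⟩,
        fun y => u ⟨y.1, Finset.mem_union_left _ y.2⟩))
      (extend1 S X q) (fun ω => rfl) (fun ω => extend1_spec S X q ω) hmTXqZ hmBKZ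
  have E6 : S.HsetS (X ∪ {p, q}) = shannonEntropy S.μ (fun ω => ((A ω, B ω, K ω), Z ω)) := by
    refine shannonEntropy_pair_congr S.μ _ _ Z
      (fun u => (u ⟨p, Finset.mem_union_right _ (Finset.mem_insert_self p {q})⟩,
        u ⟨q, Finset.mem_union_right _ (Finset.mem_insert_of_mem (Finset.mem_singleton_self q))⟩,
        fun y => u ⟨y.1, Finset.mem_union_left _ y.2⟩))
      (extend2 S X p q) (fun ω => rfl) (fun ω => extend2_spec S X p q ω) hmTXpqZ hmABKZ
  have E0 : S.Hset X = shannonEntropy S.μ K := rfl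
  -- monotonicity
  have M1 : shannonEntropy S.μ (fun ω => ((A ω, K ω), Z ω))
      ≤ shannonEntropy S.μ (fun ω => ((A ω, B ω, K ω), Z ω)) :=
    shannonEntropy_comp_le S.μ (fun ω => ((A ω, B ω, K ω), Z ω))
      (fun w => ((w.1.1, w.1.2.2), w.2)) hmABKZ
  have M2 : shannonEntropy S.μ (fun ω => ((B ω, K ω), Z ω))
      ≤ shannonEntropy S.μ (fun ω => ((A ω, B ω, K ω), Z ω)) :=
    shannonEntropy_comp_le S.μ (fun ω => ((A ω, B ω, K ω), Z ω))
      (fun w => ((w.1.2.1, w.1.2.2), w.2)) hmABKZ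
  -- submodularity
  have SUB : shannonEntropy S.μ (fun ω => (A ω, B ω, K ω)) + shannonEntropy S.μ K
      ≤ shannonEntropy S.μ (fun ω => (A ω, K ω)) + shannonEntropy S.μ (fun ω => (B ω, K ω)) :=
    shannonEntropy_submodular S.μ A B K hmABK
  -- perfectness facts
  obtain ⟨hqual, hunq⟩ := hperf
  have f1 := hunq _ hp
  have f2 := hunq _ hq
  have f3 := hqual _ hq'
  have e4' : S.HsetS (X ∪ {p}) = shannonEntropy S.μ (fun ω => ((A ω, K ω), Z ω)) := E4
  rw [E4, E1] at f1
  rw [E5, E2] at f2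
  rw [E6, E3] at f3
  rw [E3, E0]
  linarith [M1, M2, SUB, f1, f2, f3]
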